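/- arXiv:1702.00593 — 4 statements merged into one kernel-verified Lean document; each statement's English description precedes it below -/
import Mathlib

section
/- Let q : I → ℝ be a feasible flow vector that is a holding-free solution. Then q is Pareto optimal in the sense of the paper's dominance relation: there is no feasible flow vector q̃ : I → ℝ such that q̃ i > q i for every i ∈ I. -/
open Finset

/-- A feasible holding-free solution is Pareto optimal: no feasible
flow vector strictly dominates it in every coordinate. -/
theorem hfs_pareto_optimal
    {I O : Type*} [Fintype I] [Fintype O] [Nonempty I] [Nonempty O]
    (δ : I → ℝ) (σ : O → ℝ) (f : I → O → ℝ)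
    (hδ : ∀ i, 0 ≤ δ i) (hσ : ∀ o, 0 ≤ σ o)
    (hf : ∀ i o, 0 ≤ f i o) (hfsum : ∀ i, ∑ o, f i o = 1)
    (q : I → ℝ)
    (hq_feas : (∀ i, 0 ≤ q i ∧ q i ≤ δ i) ∧ (∀ o, ∑ i, f i o * q i ≤ σ o))
    (hq_hfs : ∀ i, (δ i - q i) *
        ∏ o ∈ Finset.univ.filter (fun o => 0 < f i o),
          (σ o - ∑ i', f i' o * q i') = 0) :
    ¬ ∃ q' : I → ℝ,
        ((∀ i, 0 ≤ q' i ∧ q' i ≤ δ i) ∧ (∀ o, ∑ i, f i o * q' i ≤ σ o)) ∧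
        (∀ i, q i < q' i) := by
  rintro ⟨q', ⟨⟨hq'bd, hq'sup⟩, hlt⟩⟩
  obtain ⟨i⟩ := ‹Nonempty I›
  have hδq : δ i - q i > 0 := by linarith [(hq'bd i).2, hlt i]
  have hprod : ∏ o ∈ Finset.univ.filter (fun o => 0 < f i o),
      (σ o - ∑ i', f i' o * q i') = 0 := by
    have := hq_hfs i
    rcases mul_eq_zero.mp this with h | h
    · linarith
    · exact h
  obtain ⟨o, ho, hzero⟩ := Finset.prod_eq_zero_iff.mp hprod
  have hfo : 0 < f i o := (Finset.mem_filter.mp ho).2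
  have hsum : ∑ i', f i' o * q i' = σ o := by linarith
  have hstrict : ∑ i', f i' o * q i' < ∑ i', f i' o * q' i' := by
    apply Finset.sum_lt_sum
    · intro j _
      exact mul_le_mul_of_nonneg_left (le_of_lt (hlt j)) (hf j o)
    · exact ⟨i, Finset.mem_univ i, mul_lt_mul_of_pos_left (hlt i) hfo⟩
  linarith [hq'sup o]
end

section
/- Let q : I → ℝ be a feasible flow vector that is a holding-free solution. Then q is strongly Pareto optimal: there is no feasible flow vector q̃ : I → ℝ with q̃ ≠ q and q̃ i ≥ q i for every i ∈ I. -/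
open Finset

/-- A feasible holding-free solution is strongly Pareto optimal:
no other feasible flow vector weakly dominates it in every coordinate. -/
theorem hfs_strongly_pareto_optimal
    {I O : Type*} [Fintype I] [Fintype O] [Nonempty I] [Nonempty O]
    (δ : I → ℝ) (σ : O → ℝ) (f : I → O → ℝ)
    (hδ : ∀ i, 0 ≤ δ i) (hσ : ∀ o, 0 ≤ σ o)
    (hf : ∀ i o, 0 ≤ f i o) (hfsum : ∀ i, ∑ o, f i o = 1)
    (q : I → ℝ)
    (hq_feas : (∀ i, 0 ≤ q i ∧ q i ≤ δ i) ∧ (∀ o, ∑ i, f i o * q i ≤ σ o))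
    (hq_hfs : ∀ i, (δ i - q i) *
        ∏ o ∈ Finset.univ.filter (fun o => 0 < f i o),
          (σ o - ∑ i', f i' o * q i') = 0) :
    ¬ ∃ q' : I → ℝ,
        ((∀ i, 0 ≤ q' i ∧ q' i ≤ δ i) ∧ (∀ o, ∑ i, f i o * q' i ≤ σ o)) ∧
        q' ≠ q ∧ (∀ i, q i ≤ q' i) := by
  rintro ⟨q', ⟨hq'1, hq'2⟩, hne, hdom⟩
  -- find i with q i < q' i
  obtain ⟨i, hi⟩ : ∃ i, q i < q' i := by
    by_contra h
    push_neg at h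
    exact hne (funext fun i => le_antisymm (h i) (hdom i))
  -- q i < δ i
  have hqi : q i < δ i := lt_of_lt_of_le hi (hq'1 i).2
  have hsub : δ i - q i ≠ 0 := by linarith
  have hprod : ∏ o ∈ Finset.univ.filter (fun o => 0 < f i o),
      (σ o - ∑ i', f i' o * q i') = 0 :=
    (mul_eq_zero.mp (hq_hfs i)).resolve_left hsub
  obtain ⟨o, ho, hzero⟩ := Finset.prod_eq_zero_iff.mp hprod
  have hfio : 0 < f i o := (Finset.mem_filter.mp ho).2
  have hsat : σ o = ∑ i', f i' o * q i' := by linarith [sub_eq_zero.mp hzero]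
  -- strict inequality of flows into o
  have hstrict : ∑ i', f i' o * q i' < ∑ i', f i' o * q' i' := by
    apply Finset.sum_lt_sum
    · intro j _; exact mul_le_mul_of_nonneg_left (hdom j) (hf j o)
    · exact ⟨i, Finset.mem_univ i, by nlinarith⟩
  have := hq'2 o
  linarith
end

section
/- In the Flötteröd–Rohde example, the INM solution (50/3, 600, 500/3) is a feasible holding-free solution whose total flow 50/3 + 600 + 500/3 = 2350/3 is strictly less than 800, the maximum total flow over the feasible region; concretely, there exists a feasible flow vector (namely (0, 600, 200)) whose total flow strictly exceeds that of the INM solution. -/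
/-- A flow vector `(q1, q2, q3)` is feasible in the Flötteröd–Rohde example. -/
def FRFeasible (q1 q2 q3 : ℝ) : Prop :=
  0 ≤ q1 ∧ q1 ≤ 100 ∧ 0 ≤ q2 ∧ q2 ≤ 600 ∧ 0 ≤ q3 ∧ q3 ≤ 600 ∧
  (1/2) * q3 ≤ 1400 ∧ q1 + (1/2) * q2 + (1/2) * q3 ≤ 400 ∧ (1/2) * q2 ≤ 1400

/-- A flow vector `(q1, q2, q3)` is a holding-free solution in the
Flötteröd–Rohde example. -/
def FRHFS (q1 q2 q3 : ℝ) : Prop :=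
  (100 - q1) * (400 - q1 - (1/2) * q2 - (1/2) * q3) = 0 ∧
  (600 - q2) * (400 - q1 - (1/2) * q2 - (1/2) * q3) * (1400 - (1/2) * q2) = 0 ∧
  (600 - q3) * (1400 - (1/2) * q3) * (400 - q1 - (1/2) * q2 - (1/2) * q3) = 0

/-- the INM solution is a feasible HFS with total flow
2350/3 < 800 (the maximum total flow); concretely (0, 600, 200) is feasible
with strictly larger total flow. -/
theorem inm_suboptimal_total_flow :
    (FRFeasible (50/3) 600 (500/3) ∧ FRHFS (50/3) 600 (500/3)) ∧
    (50/3 + 600 + 500/3 : ℝ) = 2350/3 ∧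
    (2350/3 : ℝ) < 800 ∧
    IsGreatest {s : ℝ | ∃ q1 q2 q3 : ℝ, FRFeasible q1 q2 q3 ∧ q1 + q2 + q3 = s}
      800 ∧
    (FRFeasible 0 600 200 ∧ (50/3 + 600 + 500/3 : ℝ) < 0 + 600 + 200) := by
  refine ⟨⟨?_, ?_⟩, by norm_num, by norm_num, ⟨⟨0, 600, 200, ?_, by norm_num⟩, ?_⟩, ?_, by norm_num⟩
  · unfold FRFeasible; norm_num
  · unfold FRHFS; norm_num
  · unfold FRFeasible; norm_num
  · rintro s ⟨q1, q2, q3, ⟨h1, h2, h3, h4, h5, h6, h7, h8, h9⟩, rfl⟩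
    linarith
  · unfold FRFeasible; norm_num
end

section
/- In the Flötteröd–Rohde example, a feasible flow vector (q1, q2, q3) is a holding-free solution if and only if the west-supply constraint is binding, i.e. q1 + (1/2)*q2 + (1/2)*q3 = 400; hence the set of feasible holding-free solutions (the Pareto frontier) is exactly the intersection of the feasible region with the plane q1 + (1/2)*q2 + (1/2)*q3 = 400. -/
lemma FR_main (q1 q2 q3 : ℝ) (hf : FRFeasible q1 q2 q3) :
    FRHFS q1 q2 q3 ↔ q1 + (1/2) * q2 + (1/2) * q3 = 400 := by
  obtain ⟨h1, h2, h3, h4, h5, h6, h7, h8, h9⟩ := hf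
  constructor
  · rintro ⟨e1, e2, e3⟩
    by_contra hne
    have hs : 400 - q1 - (1/2) * q2 - (1/2) * q3 ≠ 0 := by
      intro h; apply hne; linarith
    have hq1 : q1 = 100 := by
      rcases mul_eq_zero.mp e1 with h | h
      · linarith
      · exact absurd h hs
    have hq2 : q2 = 600 := by
      rcases mul_eq_zero.mp e2 with h | h
      · rcases mul_eq_zero.mp h with h' | h'
        · linarith
        · exact absurd h' hs
      · linarith
    have hq3 : q3 = 600 := by
      rcases mul_eq_zero.mp e3 with h | h
      · rcases mul_eq_zero.mp h with h' | h'
        · linarith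
        · linarith
      · exact absurd h hs
    rw [hq1, hq2, hq3] at h8
    linarith
  · intro hb
    have : 400 - q1 - (1/2) * q2 - (1/2) * q3 = 0 := by linarith
    refine ⟨?_, ?_, ?_⟩ <;> rw [this] <;> ring

/-- a feasible flow vector is an HFS iff the west-supply
constraint is binding; hence the set of feasible HFSs is exactly the part of
the feasible region lying in the plane q1 + q2/2 + q3/2 = 400. -/
theorem hfs_iff_west_supply_binding :
    (∀ q1 q2 q3 : ℝ, FRFeasible q1 q2 q3 →
      (FRHFS q1 q2 q3 ↔ q1 + (1/2) * q2 + (1/2) * q3 = 400)) ∧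
    {q : ℝ × ℝ × ℝ | FRFeasible q.1 q.2.1 q.2.2 ∧ FRHFS q.1 q.2.1 q.2.2} =
      {q : ℝ × ℝ × ℝ | FRFeasible q.1 q.2.1 q.2.2 ∧
        q.1 + (1/2) * q.2.1 + (1/2) * q.2.2 = 400} := by
  refine ⟨FR_main, ?_⟩
  ext ⟨a, b, c⟩
  simp only [Set.mem_setOf_eq]
  exact ⟨fun ⟨hf, hh⟩ => ⟨hf, (FR_main a b c hf).mp hh⟩,
         fun ⟨hf, hb⟩ => ⟨hf, (FR_main a b c hf).mpr hb⟩⟩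
end
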